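/- Let Λ, φ be C² solutions of the PCF system with compactly supported (in x) derivatives, uniformly in t on compact time intervals. Then the energy E(t) = ∫_ℝ [½((∂ₜΛ)² + (∂ₓΛ)²) + 2 sinh²(Λ)((∂ₜφ)² + (∂ₓφ)²)](t,x) dx is constant in t, i.e. dE/dt = 0. -/

import Mathlib

open MeasureTheory Function

noncomputable def dt (f : ℝ → ℝ → ℝ) : ℝ → ℝ → ℝ := fun t x => deriv (fun s => f s x) t
noncomputable def dx (f : ℝ → ℝ → ℝ) : ℝ → ℝ → ℝ := fun t x => deriv (fun y => f t y) x

noncomputable def enDensity (Λ φ : ℝ → ℝ → ℝ) : ℝ → ℝ → ℝ :=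
  fun t x => (1 / 2) * ((dt Λ t x) ^ 2 + (dx Λ t x) ^ 2)
    + 2 * (Real.sinh (Λ t x)) ^ 2 * ((dt φ t x) ^ 2 + (dx φ t x) ^ 2)

noncomputable def mom (Λ φ : ℝ → ℝ → ℝ) : ℝ → ℝ → ℝ :=
  fun t x => dt Λ t x * dx Λ t x + 4 * (Real.sinh (Λ t x)) ^ 2 * (dt φ t x * dx φ t x)

lemma hdt {f : ℝ → ℝ → ℝ} (hf : Differentiable ℝ (uncurry f)) (t x : ℝ) :
    HasDerivAt (fun s => f s x) (fderiv ℝ (uncurry f) (t, x) (1, 0)) t := by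
  have h1 : HasDerivAt (fun s : ℝ => (s, x)) ((1 : ℝ), (0 : ℝ)) t :=
    (hasDerivAt_id t).prodMk (hasDerivAt_const t x)
  exact (hf (t, x)).hasFDerivAt.comp_hasDerivAt t h1

lemma hdx {f : ℝ → ℝ → ℝ} (hf : Differentiable ℝ (uncurry f)) (t x : ℝ) :
    HasDerivAt (fun y => f t y) (fderiv ℝ (uncurry f) (t, x) (0, 1)) x := by
  have h1 : HasDerivAt (fun y : ℝ => (t, y)) ((0 : ℝ), (1 : ℝ)) x :=
    (hasDerivAt_const x t).prodMk (hasDerivAt_id x)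
  exact (hf (t, x)).hasFDerivAt.comp_hasDerivAt x h1

lemma dt_eq {f : ℝ → ℝ → ℝ} (hf : Differentiable ℝ (uncurry f)) (t x : ℝ) :
    dt f t x = fderiv ℝ (uncurry f) (t, x) (1, 0) := (hdt hf t x).deriv

lemma dx_eq {f : ℝ → ℝ → ℝ} (hf : Differentiable ℝ (uncurry f)) (t x : ℝ) :
    dx f t x = fderiv ℝ (uncurry f) (t, x) (0, 1) := (hdx hf t x).deriv

lemma hdt' {f : ℝ → ℝ → ℝ} (hf : Differentiable ℝ (uncurry f)) (t x : ℝ) :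
    HasDerivAt (fun s => f s x) (dt f t x) t := by
  have h := hdt hf t x; rwa [← dt_eq hf t x] at h

lemma hdx' {f : ℝ → ℝ → ℝ} (hf : Differentiable ℝ (uncurry f)) (t x : ℝ) :
    HasDerivAt (fun y => f t y) (dx f t x) x := by
  have h := hdx hf t x; rwa [← dx_eq hf t x] at h

lemma contDiff_pdv {f : ℝ → ℝ → ℝ} {n m : ℕ} (hf : ContDiff ℝ n (uncurry f))
    (hmn : (m : WithTop ℕ∞) + 1 ≤ n) (v : ℝ × ℝ) :
    ContDiff ℝ m (fun p : ℝ × ℝ => fderiv ℝ (uncurry f) p v) :=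
  (hf.fderiv_right hmn).clm_apply contDiff_const

lemma uncurry_dt {f : ℝ → ℝ → ℝ} (hf : Differentiable ℝ (uncurry f)) :
    uncurry (dt f) = fun p : ℝ × ℝ => fderiv ℝ (uncurry f) p (1, 0) := by
  funext p; exact dt_eq hf p.1 p.2

lemma uncurry_dx {f : ℝ → ℝ → ℝ} (hf : Differentiable ℝ (uncurry f)) :
    uncurry (dx f) = fun p : ℝ × ℝ => fderiv ℝ (uncurry f) p (0, 1) := by
  funext p; exact dx_eq hf p.1 p.2

lemma contDiff_dt {f : ℝ → ℝ → ℝ} (hf : ContDiff ℝ 2 (uncurry f)) :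
    ContDiff ℝ 1 (uncurry (dt f)) := by
  rw [uncurry_dt (hf.differentiable two_ne_zero)]
  exact contDiff_pdv hf (by norm_num) _

lemma contDiff_dx {f : ℝ → ℝ → ℝ} (hf : ContDiff ℝ 2 (uncurry f)) :
    ContDiff ℝ 1 (uncurry (dx f)) := by
  rw [uncurry_dx (hf.differentiable two_ne_zero)]
  exact contDiff_pdv hf (by norm_num) _

lemma clairaut {f : ℝ → ℝ → ℝ} (hf : ContDiff ℝ 2 (uncurry f)) (t x : ℝ) :
    dx (dt f) t x = dt (dx f) t x := by
  have hd : Differentiable ℝ (uncurry f) := hf.differentiable two_ne_zero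
  have hsym : IsSymmSndFDerivAt ℝ (uncurry f) (t, x) :=
    hf.contDiffAt.isSymmSndFDerivAt (by simp [minSmoothness_of_isRCLikeNormedField])
  have hfd : ContDiff ℝ 1 (fderiv ℝ (uncurry f)) := hf.fderiv_right (by norm_num)
  have key : ∀ v w : ℝ × ℝ,
      fderiv ℝ (fun p => fderiv ℝ (uncurry f) p v) (t, x) w
        = fderiv ℝ (fderiv ℝ (uncurry f)) (t, x) w v := by
    intro v w
    have : HasFDerivAt (fun p => fderiv ℝ (uncurry f) p v)
        ((ContinuousLinearMap.apply ℝ ℝ v).comp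
          (fderiv ℝ (fderiv ℝ (uncurry f)) (t, x))) (t, x) :=
      (ContinuousLinearMap.apply ℝ ℝ v).hasFDerivAt.comp _
        ((hfd.differentiable one_ne_zero) (t, x)).hasFDerivAt
    rw [this.fderiv]; rfl
  have h1 : dx (dt f) t x
      = fderiv ℝ (fun p => fderiv ℝ (uncurry f) p (1, 0)) (t, x) (0, 1) := by
    have := dx_eq (f := dt f) ((contDiff_dt hf).differentiable one_ne_zero) t x
    rw [this, uncurry_dt hd]
  have h2 : dt (dx f) t x
      = fderiv ℝ (fun p => fderiv ℝ (uncurry f) p (0, 1)) (t, x) (1, 0) := by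
    have := dt_eq (f := dx f) ((contDiff_dx hf).differentiable one_ne_zero) t x
    rw [this, uncurry_dx hd]
  rw [h1, h2, key, key, hsym]

lemma dte_eq_dxmom (Λ φ : ℝ → ℝ → ℝ)
    (hΛ : ContDiff ℝ 2 (Function.uncurry Λ)) (hφ : ContDiff ℝ 2 (Function.uncurry φ))
    (heq1 : ∀ t x, dt (dt Λ) t x - dx (dx Λ) t x
      = -2 * Real.sinh (2 * Λ t x) * ((dx φ t x) ^ 2 - (dt φ t x) ^ 2))
    (heq2 : ∀ t x, dt (fun t x => (Real.sinh (Λ t x)) ^ 2 * dt φ t x) t x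
      = dx (fun t x => (Real.sinh (Λ t x)) ^ 2 * dx φ t x) t x)
    (t x : ℝ) : dt (enDensity Λ φ) t x = dx (mom Λ φ) t x := by
  have hΛd := hΛ.differentiable two_ne_zero
  have hφd := hφ.differentiable two_ne_zero
  have hdtΛd := (contDiff_dt hΛ).differentiable one_ne_zero
  have hdxΛd := (contDiff_dx hΛ).differentiable one_ne_zero
  have hdtφd := (contDiff_dt hφ).differentiable one_ne_zero
  have hdxφd := (contDiff_dx hφ).differentiable one_ne_zero
  have hE := ((((hdt' hdtΛd t x).pow 2).add ((hdt' hdxΛd t x).pow 2)).const_mul ((1:ℝ)/2)).add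
    ((((hdt' hΛd t x).sinh.pow 2).const_mul (2:ℝ)).mul
      (((hdt' hdtφd t x).pow 2).add ((hdt' hdxφd t x).pow 2)))
  have eE : dt (enDensity Λ φ) t x = _ := hE.deriv
  have hP := ((hdx' hdtΛd t x).mul (hdx' hdxΛd t x)).add
    ((((hdx' hΛd t x).sinh.pow 2).const_mul (4:ℝ)).mul
      ((hdx' hdtφd t x).mul (hdx' hdxφd t x)))
  have eP : dx (mom Λ φ) t x = _ := hP.deriv
  have h2L : dt (fun t x => (Real.sinh (Λ t x)) ^ 2 * dt φ t x) t x = _ :=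
    (((hdt' hΛd t x).sinh.pow 2).mul (hdt' hdtφd t x)).deriv
  have h2R : dx (fun t x => (Real.sinh (Λ t x)) ^ 2 * dx φ t x) t x = _ :=
    (((hdx' hΛd t x).sinh.pow 2).mul (hdx' hdxφd t x)).deriv
  have h2 := heq2 t x
  rw [h2L, h2R] at h2
  have h1 := heq1 t x
  rw [Real.sinh_two_mul] at h1
  have cΛ := clairaut hΛ t x
  have cφ := clairaut hφ t x
  rw [eE, eP, cΛ, cφ]
  simp only [Pi.add_apply, Pi.pow_apply, Pi.mul_apply] at h2 ⊢
  linear_combination dt Λ t x * h1 + 4 * dt φ t x * h2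

lemma contDiff_en {Λ φ : ℝ → ℝ → ℝ}
    (hΛ : ContDiff ℝ 2 (Function.uncurry Λ)) (hφ : ContDiff ℝ 2 (Function.uncurry φ)) :
    ContDiff ℝ 1 (uncurry (enDensity Λ φ)) := by
  have h : uncurry (enDensity Λ φ) = fun p : ℝ × ℝ =>
      (1 / 2) * ((uncurry (dt Λ) p) ^ 2 + (uncurry (dx Λ) p) ^ 2)
        + 2 * (Real.sinh (uncurry Λ p)) ^ 2
          * ((uncurry (dt φ) p) ^ 2 + (uncurry (dx φ) p) ^ 2) := rfl
  rw [h]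
  exact (contDiff_const.mul (((contDiff_dt hΛ).pow 2).add ((contDiff_dx hΛ).pow 2))).add
    ((contDiff_const.mul ((Real.contDiff_sinh.comp (hΛ.of_le one_le_two)).pow 2)).mul
      (((contDiff_dt hφ).pow 2).add ((contDiff_dx hφ).pow 2)))

lemma contDiff_mom {Λ φ : ℝ → ℝ → ℝ}
    (hΛ : ContDiff ℝ 2 (Function.uncurry Λ)) (hφ : ContDiff ℝ 2 (Function.uncurry φ)) :
    ContDiff ℝ 1 (uncurry (mom Λ φ)) := by
  have h : uncurry (mom Λ φ) = fun p : ℝ × ℝ =>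
      uncurry (dt Λ) p * uncurry (dx Λ) p
        + 4 * (Real.sinh (uncurry Λ p)) ^ 2 * (uncurry (dt φ) p * uncurry (dx φ) p) := rfl
  rw [h]
  exact ((contDiff_dt hΛ).mul (contDiff_dx hΛ)).add
    ((contDiff_const.mul ((Real.contDiff_sinh.comp (hΛ.of_le one_le_two)).pow 2)).mul
      ((contDiff_dt hφ).mul (contDiff_dx hφ)))

set_option maxHeartbeats 1000000 in
theorem stmt_5 (Λ φ : ℝ → ℝ → ℝ)
    (hΛ : ContDiff ℝ 2 (Function.uncurry Λ)) (hφ : ContDiff ℝ 2 (Function.uncurry φ))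
    (heq1 : ∀ t x, dt (dt Λ) t x - dx (dx Λ) t x
      = -2 * Real.sinh (2 * Λ t x) * ((dx φ t x) ^ 2 - (dt φ t x) ^ 2))
    (heq2 : ∀ t x, dt (fun t x => (Real.sinh (Λ t x)) ^ 2 * dt φ t x) t x
      = dx (fun t x => (Real.sinh (Λ t x)) ^ 2 * dx φ t x) t x)
    (hsupp : ∀ T > 0, ∃ R > 0, ∀ t x : ℝ, |t| ≤ T → R ≤ |x| →
      dt Λ t x = 0 ∧ dx Λ t x = 0 ∧ dt φ t x = 0 ∧ dx φ t x = 0) :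
    ∀ t : ℝ, deriv (fun s => ∫ x : ℝ, enDensity Λ φ s x) t = 0 := by
  intro t₀
  have hce : ContDiff ℝ 1 (uncurry (enDensity Λ φ)) := contDiff_en hΛ hφ
  have hcm : ContDiff ℝ 1 (uncurry (mom Λ φ)) := contDiff_mom hΛ hφ
  have hed : Differentiable ℝ (uncurry (enDensity Λ φ)) := hce.differentiable one_ne_zero
  have hmd : Differentiable ℝ (uncurry (mom Λ φ)) := hcm.differentiable one_ne_zero
  have hec : Continuous (uncurry (enDensity Λ φ)) := hce.continuous
  have hdte_cont : Continuous (uncurry (dt (enDensity Λ φ))) := by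
    rw [uncurry_dt hed]
    exact (contDiff_pdv (n := 1) (m := 0) hce (by norm_num) _).continuous
  have hdxm_cont : Continuous (uncurry (dx (mom Λ φ))) := by
    rw [uncurry_dx hmd]
    exact (contDiff_pdv (n := 1) (m := 0) hcm (by norm_num) _).continuous
  set T : ℝ := |t₀| + 1 with hTdef
  have hT : 0 < T := by positivity
  obtain ⟨R, hR0, hR⟩ := hsupp T hT
  -- vanishing of density and momentum outside [-R, R]
  have hzero : ∀ s x : ℝ, |s| ≤ T → R ≤ |x| → enDensity Λ φ s x = 0 := by
    intro s x hs hx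
    obtain ⟨h1, h2, h3, h4⟩ := hR s x hs hx
    simp [enDensity, h1, h2, h3, h4]
  have hmzero : ∀ s x : ℝ, |s| ≤ T → R ≤ |x| → mom Λ φ s x = 0 := by
    intro s x hs hx
    obtain ⟨h1, h2, h3, h4⟩ := hR s x hs hx
    simp [mom, h1, h2, h3, h4]
  set μ : Measure ℝ := volume.restrict (Set.Icc (-R) R) with hμdef
  -- eventual equality with integral over [-R, R]
  have hball : ∀ s ∈ Metric.ball t₀ 1, |s| ≤ T := by
    intro s hs
    have : |s - t₀| < 1 := by simpa [Real.dist_eq] using hs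
    calc |s| = |t₀ + (s - t₀)| := by ring_nf
    _ ≤ |t₀| + |s - t₀| := abs_add_le _ _
    _ ≤ |t₀| + 1 := by linarith
  have hEeq : (fun s => ∫ x : ℝ, enDensity Λ φ s x)
      =ᶠ[nhds t₀] fun s => ∫ x, enDensity Λ φ s x ∂μ := by
    filter_upwards [Metric.ball_mem_nhds t₀ one_pos] with s hs
    rw [hμdef]
    refine (setIntegral_eq_integral_of_forall_compl_eq_zero ?_).symm
    intro x hx
    apply hzero s x (hball s hs)
    rcases lt_or_ge x (-R) with h | h
    · rw [abs_of_neg (by linarith)]; linarith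
    · have : R < x := by
        by_contra hcon
        exact hx ⟨h, by linarith⟩
      rw [abs_of_pos (by linarith)]; linarith
  rw [hEeq.deriv_eq]
  -- derivative under the integral sign
  have hcont_s : ∀ s : ℝ, Continuous (fun x => enDensity Λ φ s x) :=
    fun s => hec.comp (Continuous.prodMk_right s)
  have hcont_dte : ∀ s : ℝ, Continuous (fun x => dt (enDensity Λ φ) s x) :=
    fun s => hdte_cont.comp (Continuous.prodMk_right s)
  -- bound on compact set
  obtain ⟨C, hC⟩ := (IsCompact.exists_bound_of_continuousOn
    ((isCompact_Icc (a := t₀ - 1) (b := t₀ + 1)).prod (isCompact_Icc (a := -R) (b := R)))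
    hdte_cont.continuousOn)
  have key : HasDerivAt (fun s => ∫ x, enDensity Λ φ s x ∂μ)
      (∫ x, dt (enDensity Λ φ) t₀ x ∂μ) t₀ := by
    have h := hasDerivAt_integral_of_dominated_loc_of_deriv_le
      (F := fun s x => enDensity Λ φ s x) (F' := fun s x => dt (enDensity Λ φ) s x)
      (μ := μ) (x₀ := t₀) (bound := fun _ => C) (Metric.ball_mem_nhds t₀ one_pos)
      (Filter.Eventually.of_forall fun s => (hcont_s s).aestronglyMeasurable)
      ((hcont_s t₀).integrableOn_Icc)
      ((hcont_dte t₀).aestronglyMeasurable)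
      ?_ (integrableOn_const measure_Icc_lt_top.ne) ?_
    · exact h.2
    · rw [hμdef]
      rw [ae_restrict_iff' measurableSet_Icc]
      refine Filter.Eventually.of_forall fun x hx => fun s hs => ?_
      have hsmem : s ∈ Set.Icc (t₀ - 1) (t₀ + 1) := by
        have : |s - t₀| < 1 := by simpa [Real.dist_eq] using hs
        constructor <;> [linarith [abs_lt.1 this]; linarith [(abs_lt.1 this).2]]
      exact hC (s, x) ⟨hsmem, hx⟩
    · exact Filter.Eventually.of_forall fun x => fun s _ => hdt' hed s x
  rw [key.deriv]
  -- the integral of the spatial derivative of the momentum vanishes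
  have hkey2 : ∀ x : ℝ, dt (enDensity Λ φ) t₀ x = dx (mom Λ φ) t₀ x :=
    fun x => dte_eq_dxmom Λ φ hΛ hφ heq1 heq2 t₀ x
  have hRle : -R ≤ R := by linarith
  have ht₀T : |t₀| ≤ T := by rw [hTdef]; linarith [abs_nonneg t₀]
  calc ∫ x, dt (enDensity Λ φ) t₀ x ∂μ = ∫ x in Set.Icc (-R) R, dx (mom Λ φ) t₀ x := by
        rw [hμdef]; exact setIntegral_congr_fun measurableSet_Icc fun x _ => hkey2 x
    _ = ∫ x in Set.Ioc (-R) R, dx (mom Λ φ) t₀ x := integral_Icc_eq_integral_Ioc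
    _ = ∫ x in (-R)..R, dx (mom Λ φ) t₀ x := (intervalIntegral.integral_of_le hRle).symm
    _ = mom Λ φ t₀ R - mom Λ φ t₀ (-R) := by
        apply intervalIntegral.integral_eq_sub_of_hasDerivAt
        · exact fun x _ => hdx' hmd t₀ x
        · exact ((hdxm_cont.comp (Continuous.prodMk_right t₀)).intervalIntegrable _ _)
    _ = 0 := by
        rw [hmzero t₀ R ht₀T (by rw [abs_of_pos hR0]),
          hmzero t₀ (-R) ht₀T (by rw [abs_neg, abs_of_pos hR0]), sub_zero]
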